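/- arXiv:2004.06516 — 4 statements merged into one kernel-verified Lean document; each statement's English description precedes it below -/
import Mathlib

section
/- The singular values of the m × m lower bidiagonal matrix T with 1's on the diagonal and -1's on the subdiagonal are exactly 2 cos(kπ/(2m+1)) for k = 1, 2, ..., m. -/
open Real

noncomputable def Tm (m : ℕ) : Matrix (Fin m) (Fin m) ℝ := fun i j =>
  if i = j then 1 else if (i : ℕ) = (j : ℕ) + 1 then -1 else 0

noncomputable def Vv (θ : ℝ) (n : ℕ) : ℝ := (-1)^n * Real.sin ((2*n+1)*θ)

lemma Tm_split (m : ℕ) (i j : Fin m) :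
    Tm m i j = (if i = j then (1:ℝ) else 0) + (if (i : ℕ) = (j : ℕ) + 1 then -1 else 0) := by
  unfold Tm
  rcases eq_or_ne i j with h | h
  · subst h; simp
  · have : (i:ℕ) ≠ (i:ℕ) + 1 := by omega
    simp [h]

lemma Tt_mulVec (m : ℕ) (V : ℕ → ℝ) (hVm : V m = 0) (i : Fin m) :
    (Tm m).transpose.mulVec (fun j => V j) i = V i - V (i + 1) := by
  simp only [Matrix.mulVec, dotProduct, Matrix.transpose_apply]
  have : ∀ j : Fin m, Tm m j i * V j =
      (if j = i then V j else 0) + (if (j:ℕ) = (i:ℕ)+1 then -V j else 0) := by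
    intro j
    rw [Tm_split]
    split_ifs <;> ring
  rw [Finset.sum_congr rfl fun j _ => this j, Finset.sum_add_distrib,
    Finset.sum_ite_eq' Finset.univ i (fun j : Fin m => V j)]
  simp only [Finset.mem_univ, if_true]
  by_cases h : (i:ℕ) + 1 < m
  · rw [Finset.sum_eq_single (⟨(i:ℕ)+1, h⟩ : Fin m)]
    · simp [sub_eq_add_neg]
    · intro b _ hb
      have : (b:ℕ) ≠ (i:ℕ)+1 := fun hc => hb (Fin.ext hc)
      simp [this]
    · simp
  · have hm : (i:ℕ) + 1 = m := by omega
    rw [Finset.sum_eq_zero, hm, hVm]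
    · ring
    · intro b _
      have : (b:ℕ) ≠ (i:ℕ)+1 := by omega
      simp [this]

lemma T_mulVec (m : ℕ) (w : Fin m → ℝ) (i : Fin m) :
    (Tm m).mulVec w i = w i + (if h : 0 < (i:ℕ) then -w ⟨(i:ℕ)-1, by omega⟩ else 0) := by
  simp only [Matrix.mulVec, dotProduct]
  have : ∀ j : Fin m, Tm m i j * w j =
      (if j = i then w j else 0) + (if (i:ℕ) = (j:ℕ)+1 then -w j else 0) := by
    intro j
    rw [Tm_split]
    rcases eq_or_ne i j with h | h
    · subst h; simp
    · rw [if_neg h, if_neg (Ne.symm h)]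
      split_ifs <;> ring
  rw [Finset.sum_congr rfl fun j _ => this j, Finset.sum_add_distrib,
    Finset.sum_ite_eq' Finset.univ i w]
  simp only [Finset.mem_univ, if_true]
  congr 1
  by_cases h : 0 < (i:ℕ)
  · rw [dif_pos h, Finset.sum_eq_single (⟨(i:ℕ)-1, by omega⟩ : Fin m)]
    · simp [Fin.ext_iff]; omega
    · intro b _ hb
      have : (i:ℕ) ≠ (b:ℕ)+1 := by
        intro hc; apply hb; apply Fin.ext; simp; omega
      simp [this]
    · simp
  · rw [dif_neg h, Finset.sum_eq_zero]
    intro b _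
    have : (i:ℕ) ≠ (b:ℕ)+1 := by omega
    simp [this]

lemma Vv_rec (θ : ℝ) (n : ℕ) :
    Vv θ (n+2) + Vv θ n = -(2*Real.cos (2*θ)) * Vv θ (n+1) := by
  unfold Vv
  have h1 : (2*((n:ℝ)+2)+1)*θ = (2*(n+1)+1)*θ + 2*θ := by push_cast; ring
  have h2 : (2*(n:ℝ)+1)*θ = (2*(n+1)+1)*θ - 2*θ := by push_cast; ring
  push_cast
  rw [h1, h2, Real.sin_add, Real.sin_sub]
  ring

lemma Vv_row0 (θ : ℝ) : Vv θ 0 - Vv θ 1 = 4 * Real.cos θ ^ 2 * Vv θ 0 := by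
  unfold Vv
  have h1 : (2*(1:ℝ)+1)*θ = 2*θ + θ := by ring
  have h0 : (2*(0:ℝ)+1)*θ = θ := by ring
  push_cast
  rw [h1, h0, Real.sin_add, Real.sin_two_mul, Real.cos_two_mul]
  ring

lemma eig_mem (m : ℕ) (k : Fin m) :
    (4 * Real.cos ((((k:ℕ):ℝ)+1)*π/(2*m+1)) ^ 2) ∈ spectrum ℝ (Tm m * (Tm m).transpose) := by
  set θ : ℝ := (((k:ℕ):ℝ)+1)*π/(2*m+1) with hθ
  have hm1 : (0:ℝ) < 2*m+1 := by positivity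
  have hVm : Vv θ m = 0 := by
    have harg : (2*(m:ℝ)+1)*θ = ((k:ℕ)+1 : ℕ) * π := by
      rw [hθ]; push_cast; field_simp
    unfold Vv
    rw [harg, Real.sin_nat_mul_pi, mul_zero]
  have hθpos : 0 < θ := by
    rw [hθ]; positivity
  have hθlt : θ < π := by
    rw [hθ, div_lt_iff₀ hm1]
    have hk : ((k:ℕ):ℝ) + 1 ≤ (m:ℝ) := by
      have := k.isLt; exact_mod_cast Nat.succ_le_of_lt this
    nlinarith [Real.pi_pos]
  set v : Fin m → ℝ := fun j => Vv θ j with hv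
  have hAv : (Tm m * (Tm m).transpose).mulVec v = (4 * Real.cos θ ^ 2) • v := by
    rw [← Matrix.mulVec_mulVec]
    have hw : (Tm m).transpose.mulVec v = fun i : Fin m => Vv θ i - Vv θ (i+1) :=
      funext fun i => Tt_mulVec m (Vv θ) hVm i
    rw [hw]
    funext i
    rw [T_mulVec]
    by_cases h : 0 < (i:ℕ)
    · rw [dif_pos h]
      obtain ⟨n, hn⟩ : ∃ n, (i:ℕ) = n + 1 := ⟨(i:ℕ)-1, by omega⟩
      have h1 : ((⟨(i:ℕ)-1, by omega⟩ : Fin m) : ℕ) = n := by simp [hn]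
      simp only [Pi.smul_apply, smul_eq_mul, hv, h1, hn]
      have hrec := Vv_rec θ n
      have hc : Real.cos (2*θ) = 2 * Real.cos θ ^ 2 - 1 := Real.cos_two_mul θ
      have : Vv θ (n+1+1) = Vv θ (n+2) := by norm_num
      rw [this]
      simp only [Nat.add_sub_cancel]
      linear_combination (-1 : ℝ) * hrec + 2 * Vv θ (n+1) * hc
    · rw [dif_neg h]
      have h0 : (i:ℕ) = 0 := by omega
      simp only [Pi.smul_apply, smul_eq_mul, hv, h0]
      have := Vv_row0 θ
      norm_num
      linarith [this]
  rw [spectrum.mem_iff]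
  intro hU
  rw [Matrix.isUnit_iff_isUnit_det, isUnit_iff_ne_zero] at hU
  apply hU
  rw [← Matrix.exists_mulVec_eq_zero_iff]
  refine ⟨v, ?_, ?_⟩
  · intro hv0
    have hm0 : 0 < m := k.pos
    have : v ⟨0, hm0⟩ = 0 := by rw [hv0]; rfl
    simp only [hv, Vv] at this
    norm_num at this
    exact (ne_of_gt (Real.sin_pos_of_pos_of_lt_pi hθpos hθlt)) this
  · have : (algebraMap ℝ (Matrix (Fin m) (Fin m) ℝ)) (4 * Real.cos θ ^ 2)
        - (Tm m * (Tm m).transpose)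
        = (4 * Real.cos θ ^ 2) • 1 - (Tm m * (Tm m).transpose) := by
      rw [Algebra.algebraMap_eq_smul_one]
    rw [this, Matrix.sub_mulVec, Matrix.smul_mulVec, Matrix.one_mulVec, hAv]
    simp

lemma theta_lt (m : ℕ) (k : Fin m) :
    (((k:ℕ):ℝ)+1)*π/(2*m+1) < π/2 := by
  have hm1 : (0:ℝ) < 2*m+1 := by positivity
  rw [div_lt_iff₀ hm1]
  have hk : ((k:ℕ):ℝ) + 1 ≤ (m:ℝ) := by
    have := k.isLt; exact_mod_cast Nat.succ_le_of_lt this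
  nlinarith [Real.pi_pos]

lemma cos_theta_pos (m : ℕ) (k : Fin m) :
    0 < Real.cos ((((k:ℕ):ℝ)+1)*π/(2*m+1)) := by
  apply Real.cos_pos_of_mem_Ioo
  constructor
  · have : (0:ℝ) < (((k:ℕ):ℝ)+1)*π/(2*m+1) := by positivity
    linarith [Real.pi_pos]
  · exact theta_lt m k

lemma lam_inj (m : ℕ) : Function.Injective
    (fun k : Fin m => 4 * Real.cos ((((k:ℕ):ℝ)+1)*π/(2*m+1)) ^ 2) := by
  intro k1 k2 h
  simp only at h
  have h1 := cos_theta_pos m k1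
  have h2 := cos_theta_pos m k2
  have hcos : Real.cos ((((k1:ℕ):ℝ)+1)*π/(2*m+1)) = Real.cos ((((k2:ℕ):ℝ)+1)*π/(2*m+1)) := by
    nlinarith
  have hθ : (((k1:ℕ):ℝ)+1)*π/(2*m+1) = (((k2:ℕ):ℝ)+1)*π/(2*m+1) := by
    apply Real.injOn_cos _ _ hcos
    · constructor
      · positivity
      · linarith [theta_lt m k1, Real.pi_pos]
    · constructor
      · positivity
      · linarith [theta_lt m k2, Real.pi_pos]
  have hm1 : (0:ℝ) < 2*m+1 := by positivity
  have hπ := Real.pi_ne_zero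
  field_simp at hθ
  exact Fin.ext (by exact_mod_cast (by linarith : ((k1:ℕ):ℝ) = ((k2:ℕ):ℝ)))

lemma spec_eq (m : ℕ) :
    spectrum ℝ (Tm m * (Tm m).transpose) =
      Set.range (fun k : Fin m => 4 * Real.cos ((((k:ℕ):ℝ)+1)*π/(2*m+1)) ^ 2) := by
  apply Set.Subset.antisymm
  · intro μ hμ
    set A := Tm m * (Tm m).transpose with hA
    have hdet : (Matrix.scalar (Fin m) μ - A).det = 0 := by
      rw [spectrum.mem_iff] at hμ
      by_contra hd
      exact hμ ((Matrix.isUnit_iff_isUnit_det _).mpr (isUnit_iff_ne_zero.mpr hd))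
    have heval : A.charpoly.eval μ = 0 := by
      rw [Matrix.charpoly, eval_det, Matrix.matPolyEquiv_charmatrix]
      simpa using hdet
    have hmonic : A.charpoly.Monic := A.charpoly_monic
    have hp0 : A.charpoly ≠ 0 := hmonic.ne_zero
    have hdeg : A.charpoly.natDegree = m := by
      rw [Matrix.charpoly_natDegree_eq_dim, Fintype.card_fin]
    -- every lam k is a root
    have hroot : ∀ k : Fin m,
        A.charpoly.eval (4 * Real.cos ((((k:ℕ):ℝ)+1)*π/(2*m+1)) ^ 2) = 0 := by
      intro k
      have hk := eig_mem m k
      rw [spectrum.mem_iff] at hk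
      rw [Matrix.charpoly, eval_det, Matrix.matPolyEquiv_charmatrix]
      simp only [Polynomial.eval_sub, Polynomial.eval_X, Polynomial.eval_C]
      by_contra hd
      apply hk
      apply (Matrix.isUnit_iff_isUnit_det _).mpr
      apply isUnit_iff_ne_zero.mpr
      convert hd using 2
      rfl
    by_contra hrange
    -- counting
    set F : Finset ℝ :=
      Finset.image (fun k : Fin m => 4 * Real.cos ((((k:ℕ):ℝ)+1)*π/(2*m+1)) ^ 2)
        Finset.univ with hF
    have hFcard : F.card = m := by
      rw [hF, Finset.card_image_of_injective _ (lam_inj m), Finset.card_univ, Fintype.card_fin]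
    have hFsub : insert μ F ⊆ A.charpoly.roots.toFinset := by
      intro x hx
      rcases Finset.mem_insert.mp hx with h | h
      · subst h
        rw [Multiset.mem_toFinset, Polynomial.mem_roots hp0]
        exact heval
      · rw [hF, Finset.mem_image] at h
        obtain ⟨k, _, hk⟩ := h
        rw [Multiset.mem_toFinset, Polynomial.mem_roots hp0]
        rw [← hk]
        exact hroot k
    have hμF : μ ∉ F := by
      rw [hF, Finset.mem_image]
      rintro ⟨k, _, hk⟩
      exact hrange ⟨k, hk⟩
    have hcard : (insert μ F).card = m + 1 := by
      rw [Finset.card_insert_of_notMem hμF, hFcard]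
    have hle : (insert μ F).card ≤ A.charpoly.roots.toFinset.card :=
      Finset.card_le_card hFsub
    have hle2 : A.charpoly.roots.toFinset.card ≤ A.charpoly.roots.card :=
      Multiset.toFinset_card_le _
    have hle3 : Multiset.card A.charpoly.roots ≤ m := by
      have h := Polynomial.card_roots' A.charpoly
      rw [hdeg] at h
      exact h
    omega
  · rintro _ ⟨k, rfl⟩
    exact eig_mem m k

theorem bidiagonal_singular_values (m : ℕ) :
    let T : Matrix (Fin m) (Fin m) ℝ := fun i j =>
      if i = j then 1 else if (i : ℕ) = (j : ℕ) + 1 then -1 else 0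
    {s : ℝ | 0 ≤ s ∧ s ^ 2 ∈ spectrum ℝ (T * T.transpose)} =
      Set.range (fun k : Fin m =>
        2 * Real.cos (((k : ℕ) + 1 : ℝ) * π / (2 * m + 1))) := by
  intro T
  have hT : T = Tm m := rfl
  rw [hT]
  ext s
  simp only [Set.mem_setOf_eq, Set.mem_range, spec_eq m]
  constructor
  · rintro ⟨hs, ⟨k, hk⟩⟩
    refine ⟨k, ?_⟩
    have hcpos := cos_theta_pos m k
    have h2 : s ^ 2 = (2 * Real.cos ((((k:ℕ):ℝ)+1)*π/(2*m+1))) ^ 2 := by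
      rw [← hk]; ring
    have hfac : (s - 2 * Real.cos ((((k:ℕ):ℝ)+1)*π/(2*m+1))) *
        (s + 2 * Real.cos ((((k:ℕ):ℝ)+1)*π/(2*m+1))) = 0 := by
      linear_combination h2
    rcases mul_eq_zero.mp hfac with h | h
    · linarith
    · linarith
  · rintro ⟨k, rfl⟩
    have hcpos := cos_theta_pos m k
    refine ⟨by linarith, ⟨k, ?_⟩⟩
    ring
end

section
/- For the simple symmetric random walk on ℤ_n (each step moves ±1 mod n with probability 1/2 each), the probability of returning to the starting point after 2τ steps satisfies max{1/n, C(2τ, τ)/4^τ} ≤ p ≤ 4/n + 1/√(πτ), and in particular C(2τ,τ)/4^τ ≥ 1/(2√τ). -/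
open Real Finset

section Aux

set_option linter.unusedSectionVars false

variable (n : ℕ) [NeZero n]

private def shiftM (a : ZMod n) : Matrix (ZMod n) (ZMod n) ℝ :=
  Matrix.of fun x y => if y = x + a then 1 else 0

private lemma shiftM_mul (a b : ZMod n) : shiftM n a * shiftM n b = shiftM n (a + b) := by
  ext x y
  simp only [Matrix.mul_apply, shiftM, Matrix.of_apply, ite_mul, one_mul, zero_mul,
    Finset.sum_ite_eq', Finset.mem_univ, if_true, add_assoc]

private lemma shiftM_zero : shiftM n 0 = 1 := by
  ext x y
  simp [shiftM, Matrix.one_apply, eq_comm]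

private lemma shiftM_pow (a : ZMod n) (k : ℕ) : shiftM n a ^ k = shiftM n ((k : ZMod n) * a) := by
  induction k with
  | zero => simp [shiftM_zero]
  | succ k ih =>
      rw [pow_succ, ih, shiftM_mul]
      push_cast
      ring_nf

private lemma cycle_walk_formula (τ : ℕ)
    (L : Matrix (ZMod n) (ZMod n) ℝ)
    (hL : L = fun x y => (if y = x + 1 then 1 / 2 else 0) + (if y = x - 1 then 1 / 2 else 0)) :
    (L ^ (2*τ)) 0 0 = (1/4 : ℝ)^τ * ∑ j ∈ range (2*τ+1),
      ((2*τ).choose j : ℝ) * (if ((j : ZMod n) = ((2*τ - j : ℕ) : ZMod n)) then 1 else 0) := by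
  have hL' : L = (2⁻¹ : ℝ) • (shiftM n 1 + shiftM n (-1)) := by
    rw [hL]
    ext x y
    simp only [Matrix.smul_apply, Matrix.add_apply, shiftM, Matrix.of_apply, sub_eq_add_neg]
    split_ifs <;> norm_num
  have hcomm : Commute (shiftM n 1) (shiftM n (-1)) := by
    unfold Commute SemiconjBy
    rw [shiftM_mul, shiftM_mul, add_comm]
  rw [hL', smul_pow, hcomm.add_pow]
  rw [Matrix.smul_apply, Matrix.sum_apply]
  have hterm : ∀ j ∈ range (2*τ+1),
      (shiftM n 1 ^ j * shiftM n (-1) ^ (2*τ - j) *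
        ((2*τ).choose j : Matrix (ZMod n) (ZMod n) ℝ)) 0 0
      = ((2*τ).choose j : ℝ) * (if ((j : ZMod n) = ((2*τ - j : ℕ) : ZMod n)) then 1 else 0) := by
    intro j hj
    have hcast : (((2*τ).choose j : ℕ) : Matrix (ZMod n) (ZMod n) ℝ)
        = (((2*τ).choose j : ℕ):ℝ) • 1 := by
      simp [Nat.cast_smul_eq_nsmul]
    rw [shiftM_pow, shiftM_pow, shiftM_mul, hcast, mul_smul_comm, mul_one, Matrix.smul_apply,
      smul_eq_mul]
    congr 1
    simp only [shiftM, Matrix.of_apply, zero_add, mul_one, mul_neg, ← sub_eq_add_neg]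
    by_cases h : (j : ZMod n) = ((2*τ - j : ℕ) : ZMod n)
    · simp [h, sub_eq_zero, eq_comm]
    · have : ¬ ((0:ZMod n) = (j : ZMod n) - ((2*τ - j : ℕ) : ZMod n)) := by
        rw [eq_comm, sub_eq_zero]; exact h
      simp [h, this]
  rw [Finset.sum_congr rfl hterm, smul_eq_mul]
  congr 1
  rw [pow_mul]
  norm_num

private lemma one_div_le_p (τ : ℕ)
    (L : Matrix (ZMod n) (ZMod n) ℝ)
    (hL : L = fun x y => (if y = x + 1 then 1 / 2 else 0) + (if y = x - 1 then 1 / 2 else 0)) :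
    1 / (n:ℝ) ≤ (L ^ (2*τ)) 0 0 := by
  have hrow : ∀ k : ℕ, ∀ x : ZMod n, ∑ y, (L ^ k) x y = 1 := by
    intro k
    induction k with
    | zero => intro x; simp [Matrix.one_apply]
    | succ k ih =>
        intro x
        rw [pow_succ']
        simp only [Matrix.mul_apply]
        rw [Finset.sum_comm]
        have : ∀ z ∈ (univ : Finset (ZMod n)), ∑ y, L x z * (L ^ k) z y = L x z := by
          intro z _
          rw [← Finset.mul_sum, ih z, mul_one]
        rw [Finset.sum_congr rfl this, hL]
        simp [Finset.sum_add_distrib]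
        norm_num
  have hsymmL : L.IsSymm := by
    rw [hL]
    ext x y
    show (if x = y + 1 then (1:ℝ) / 2 else 0) + (if x = y - 1 then 1 / 2 else 0) = (if y = x + 1 then 1 / 2 else 0) + (if y = x - 1 then 1 / 2 else 0)
    have h1 : y = x + 1 ↔ x = y - 1 := by constructor <;> intro h <;> simp [h]
    have h2 : y = x - 1 ↔ x = y + 1 := by constructor <;> intro h <;> simp [h]
    simp only [h1, h2]
    rw [add_comm]
  have hsymm : ∀ y : ZMod n, (L ^ τ) y 0 = (L ^ τ) 0 y := by
    intro y
    have := congrFun (congrFun (Matrix.IsSymm.pow hsymmL τ) 0) y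
    rw [Matrix.transpose_apply] at this
    exact this
  have hp : (L ^ (2*τ)) 0 0 = ∑ y, ((L ^ τ) 0 y)^2 := by
    rw [two_mul, pow_add, Matrix.mul_apply]
    apply Finset.sum_congr rfl
    intro y _
    rw [hsymm y, sq]
  rw [hp]
  have hcs := sq_sum_le_card_mul_sum_sq (s := (univ : Finset (ZMod n)))
    (f := fun y => (L ^ τ) 0 y)
  rw [hrow τ 0, one_pow, Finset.card_univ, ZMod.card] at hcs
  have hn : (0:ℝ) < n := by
    have := Nat.pos_of_ne_zero (NeZero.ne n); exact_mod_cast this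
  rw [div_le_iff₀ hn]
  nlinarith [hcs]

private lemma exists_period :
    ∃ m : ℕ, 0 < m ∧ n ≤ 2*m ∧ ∀ d : ℕ, (n ∣ 2*d ↔ m ∣ d) := by
  have hn : 0 < n := Nat.pos_of_ne_zero (NeZero.ne n)
  rcases Nat.even_or_odd n with he | ho
  · obtain ⟨m, rfl⟩ := he
    refine ⟨m, by omega, by omega, fun d => ?_⟩
    rw [show m + m = 2*m by ring]
    exact mul_dvd_mul_iff_left (two_ne_zero)
  · refine ⟨n, hn, by omega, fun d => ?_⟩
    constructor
    · intro h
      have hcop : Nat.Coprime n 2 :=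
        ((Nat.prime_two.coprime_iff_not_dvd).2
          (fun h2 => (Nat.not_even_iff_odd.2 ho) (even_iff_two_dvd.2 h2))).symm
      exact hcop.dvd_of_dvd_mul_left h
    · intro h
      exact h.mul_left 2

end Aux

private lemma sum_decomp' (g : ℕ → ℕ) (τ : ℕ) :
    ∑ j ∈ range (2*τ+1), g j
      = ∑ d ∈ Ioc 0 τ, g (τ - d) + g τ + ∑ d ∈ Ioc 0 τ, g (τ + d) := by
  have h0 : range (2*τ+1) = Ico 0 (2*τ+1) := by rw [Finset.range_eq_Ico]
  rw [h0, ← Finset.sum_Ico_consecutive g (Nat.zero_le τ) (by omega : τ ≤ 2*τ+1)]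
  have hleft : ∑ j ∈ Ico 0 τ, g j = ∑ d ∈ Ioc 0 τ, g (τ - d) := by
    apply Finset.sum_nbij' (i := fun j => τ - j) (j := fun d => τ - d)
    · intro a ha; simp only [mem_Ico] at ha; simp only [mem_Ioc]; omega
    · intro a ha; simp only [mem_Ioc] at ha; simp only [mem_Ico]; omega
    · intro a ha; simp only [mem_Ico] at ha; omega
    · intro a ha; simp only [mem_Ioc] at ha; omega
    · intro a ha; simp only [mem_Ico] at ha; congr 1; omega
  have hright : ∑ j ∈ Ico τ (2*τ+1), g j = g τ + ∑ d ∈ Ioc 0 τ, g (τ + d) := by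
    have h1 : Ico τ (2*τ+1) = Icc τ (2*τ) := by
      ext x; simp [Nat.lt_succ_iff]
    rw [h1]
    have h2 : ∑ j ∈ Icc τ (2*τ), g j = ∑ d ∈ Icc 0 τ, g (τ + d) := by
      apply Finset.sum_nbij' (i := fun j => j - τ) (j := fun d => τ + d)
      · intro a ha; simp only [mem_Icc] at ha; simp only [mem_Icc]; omega
      · intro a ha; simp only [mem_Icc] at ha; simp only [mem_Icc]; omega
      · intro a ha; simp only [mem_Icc] at ha; omega
      · intro a ha; simp only [mem_Icc] at ha; omega
      · intro a ha; simp only [mem_Icc] at ha; congr 1; omega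
    rw [h2, ← Finset.Ioc_insert_left (Nat.zero_le τ), Finset.sum_insert (by simp)]
    simp [add_comm]
  rw [hleft, hright]
  ring

private lemma mult_sum_le (f : ℕ → ℕ) (hf : ∀ i j, i ≤ j → f j ≤ f i) (m : ℕ) :
    ∀ K : ℕ, m * ∑ k ∈ Ioc 0 K, f (k*m) ≤ ∑ d ∈ Ioc 0 (K*m), f d := by
  intro K
  induction K with
  | zero => simp
  | succ K ih =>
      rw [← Finset.sum_Ioc_consecutive f (by omega : 0 ≤ K*m)
        (Nat.mul_le_mul_right m (Nat.le_succ K))]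
      rw [show Ioc 0 (K+1) = insert (K+1) (Ioc 0 K) by
        ext x; simp only [mem_Ioc, mem_insert]; omega]
      rw [Finset.sum_insert (by simp)]
      have hcard : m * f ((K+1)*m) ≤ ∑ d ∈ Ioc (K*m) ((K+1)*m), f d := by
        have := Finset.card_nsmul_le_sum (Ioc (K*m) ((K+1)*m)) f (f ((K+1)*m))
          (fun d hd => hf d ((K+1)*m) (by simp only [mem_Ioc] at hd; exact hd.2))
        simpa [Nat.card_Ioc, smul_eq_mul, Nat.succ_mul] using this
      calc m * (f ((K+1)*m) + ∑ k ∈ Ioc 0 K, f (k*m))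
          = m * f ((K+1)*m) + m * ∑ k ∈ Ioc 0 K, f (k*m) := by ring
        _ ≤ ∑ d ∈ Ioc (K*m) ((K+1)*m), f d + ∑ d ∈ Ioc 0 (K*m), f d := Nat.add_le_add hcard ih
        _ = _ := by rw [add_comm]

private lemma multiples_reindex (f : ℕ → ℕ) (m : ℕ) (hm : 0 < m) (τ : ℕ) :
    ∑ d ∈ Ioc 0 τ, (if m ∣ d then f d else 0) = ∑ k ∈ Ioc 0 (τ/m), f (k*m) := by
  rw [Finset.sum_ite, Finset.sum_const_zero, add_zero]
  apply Finset.sum_nbij' (i := fun d => d/m) (j := fun k => k*m)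
  · intro a ha
    simp only [mem_filter, mem_Ioc] at ha
    obtain ⟨⟨h1, h2⟩, c, rfl⟩ := ha
    simp only [mem_Ioc]
    constructor
    · rw [Nat.mul_div_cancel_left _ hm]
      exact Nat.pos_of_ne_zero (fun h => by subst h; simp at h1)
    · exact Nat.div_le_div_right h2
  · intro k hk
    simp only [mem_Ioc] at hk
    simp only [mem_filter, mem_Ioc]
    refine ⟨⟨Nat.mul_pos hk.1 hm, ?_⟩, ⟨k, mul_comm k m⟩⟩
    calc k * m ≤ (τ/m) * m := Nat.mul_le_mul_right m hk.2
      _ ≤ τ := Nat.div_mul_le_self τ m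
  · intro a ha
    simp only [mem_filter, mem_Ioc] at ha
    exact Nat.div_mul_cancel ha.2
  · intro k hk
    exact Nat.mul_div_cancel k hm
  · intro a ha
    simp only [mem_filter, mem_Ioc] at ha
    rw [Nat.div_mul_cancel ha.2]

private lemma choose_right_anti (τ : ℕ) : ∀ i j : ℕ, i ≤ j →
    (2*τ).choose (τ+j) ≤ (2*τ).choose (τ+i) := by
  have step : ∀ i : ℕ, (2*τ).choose (τ+i+1) ≤ (2*τ).choose (τ+i) := by
    intro i
    rcases le_or_gt τ i with h | h
    · rw [Nat.choose_eq_zero_of_lt (by omega)]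
      exact Nat.zero_le _
    · have h1 : (2*τ).choose (τ+i) = (2*τ).choose (τ-i) := by
        rw [← Nat.choose_symm (by omega : τ+i ≤ 2*τ)]
        congr 1
        omega
      have h2 : (2*τ).choose (τ+i+1) = (2*τ).choose (τ-i-1) := by
        rw [← Nat.choose_symm (by omega : τ+i+1 ≤ 2*τ)]
        congr 1
        omega
      rw [h1, h2]
      have h3 : τ - i - 1 < (2*τ)/2 := by omega
      have := Nat.choose_le_succ_of_lt_half_left h3
      rwa [show τ - i - 1 + 1 = τ - i by omega] at this
  intro i j hij
  induction j with
  | zero => simp_all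
  | succ j ih =>
      rcases Nat.lt_or_ge i (j+1) with h | h
      · exact (step j).trans (ih (by omega))
      · have : i = j + 1 := by omega
        subst this
        rfl

noncomputable def aCB (k : ℕ) : ℝ := (Nat.centralBinom k : ℝ) / 4 ^ k

lemma aCB_pos (k : ℕ) : 0 < aCB k := by
  unfold aCB
  apply div_pos
  · exact_mod_cast Nat.centralBinom_pos k
  · positivity

lemma aCB_succ (k : ℕ) : aCB (k+1) = aCB k * (2*k+1) / (2*k+2) := by
  have h := Nat.succ_mul_centralBinom_succ k
  have h' : ((k:ℝ)+1) * (Nat.centralBinom (k+1) : ℝ) = 2 * (2*k+1) * Nat.centralBinom k := by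
    exact_mod_cast h
  unfold aCB
  have hk : ((k:ℝ)+1) ≠ 0 := by positivity
  field_simp
  ring_nf
  ring_nf at h'
  nlinarith [h', pow_pos (show (0:ℝ) < 4 by norm_num) k]

lemma aCB_wallis (k : ℕ) : (2*(k:ℝ)+1) * (aCB k)^2 * Real.Wallis.W k = 1 := by
  induction k with
  | zero => simp [aCB, Real.Wallis.W]
  | succ k ih =>
      rw [Real.Wallis.W_succ, aCB_succ]
      have h1 : (2*(k:ℝ)+1) ≠ 0 := by positivity
      have h2 : (2*(k:ℝ)+2) ≠ 0 := by positivity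
      have h3 : (2*(k:ℝ)+3) ≠ 0 := by positivity
      push_cast
      field_simp
      linear_combination (2*(k:ℝ)+3) * ih

lemma aCB_le_inv_sqrt_pi (τ : ℕ) (hτ : 1 ≤ τ) : aCB τ ≤ 1 / Real.sqrt (π * τ) := by
  have hτR : (1:ℝ) ≤ τ := by exact_mod_cast hτ
  have hid := aCB_wallis τ
  have hWpos := Real.Wallis.W_pos τ
  have hW := Real.Wallis.le_W τ
  rw [div_mul_eq_mul_div, div_le_iff₀ (by positivity : (0:ℝ) < 2*τ+2)] at hW
  have h5 : π * τ ≤ (2*τ+1) * Real.Wallis.W τ := by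
    nlinarith [mul_le_mul_of_nonneg_left hW (show (0:ℝ) ≤ 2*τ+1 by positivity), Real.pi_pos]
  have h6 : (aCB τ)^2 * (π*τ) ≤ 1 := by
    calc (aCB τ)^2 * (π*τ) ≤ (aCB τ)^2 * ((2*τ+1) * Real.Wallis.W τ) := by
          exact mul_le_mul_of_nonneg_left h5 (sq_nonneg _)
      _ = 1 := by linear_combination hid
  have hπτ : (0:ℝ) < π * τ := by positivity
  have ha : aCB τ = Real.sqrt ((aCB τ)^2) := (Real.sqrt_sq (aCB_pos τ).le).symm
  rw [ha, one_div, ← Real.sqrt_inv]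
  apply Real.sqrt_le_sqrt
  rw [← one_div, le_div_iff₀ hπτ]
  exact h6

lemma inv_sqrt_le_aCB (τ : ℕ) (hτ : 1 ≤ τ) : 1 / (2 * Real.sqrt τ) ≤ aCB τ := by
  have key : 1/(4*(τ:ℝ)) ≤ (aCB τ)^2 := by
    rcases eq_or_lt_of_le hτ with h1 | h2
    · have : τ = 1 := h1.symm
      subst this
      have : aCB 1 = 1/2 := by
        unfold aCB
        norm_num [Nat.centralBinom]
      rw [this]; norm_num
    · have hτ2 : (2:ℝ) ≤ τ := by exact_mod_cast h2
      have hid := aCB_wallis τ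
      have hW := Real.Wallis.W_le τ
      have hA : 1 ≤ (aCB τ)^2 * (2*τ+1) * (π/2) := by
        nlinarith [mul_le_mul_of_nonneg_left hW
          (show (0:ℝ) ≤ (aCB τ)^2 * (2*τ+1) by positivity)]
      have hτpos : (0:ℝ) < τ := by linarith
      rw [div_le_iff₀ (by positivity : (0:ℝ) < 4*(τ:ℝ))]
      nlinarith [hA, sq_nonneg (aCB τ), Real.pi_lt_d2,
        mul_nonneg (mul_nonneg (show (0:ℝ) ≤ 3.15 - π by linarith [Real.pi_lt_d2])
          (show (0:ℝ) ≤ (τ:ℝ) by positivity)) (sq_nonneg (aCB τ)),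
        mul_nonneg (show (0:ℝ) ≤ (τ:ℝ) - 2 by linarith) (sq_nonneg (aCB τ))]
  have hτpos : (0:ℝ) < τ := by exact_mod_cast Nat.lt_of_lt_of_le Nat.zero_lt_one hτ
  have hs : Real.sqrt (1/(4*(τ:ℝ))) = 1/(2*Real.sqrt τ) := by
    rw [one_div, Real.sqrt_inv, show (4*(τ:ℝ)) = 2^2*τ by ring,
      Real.sqrt_mul (by positivity), Real.sqrt_sq (by norm_num : (0:ℝ) ≤ 2), one_div]
  calc 1/(2*Real.sqrt τ) = Real.sqrt (1/(4*(τ:ℝ))) := hs.symm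
    _ ≤ Real.sqrt ((aCB τ)^2) := Real.sqrt_le_sqrt key
    _ = aCB τ := Real.sqrt_sq (aCB_pos τ).le

theorem return_probability_cycle (n τ : ℕ) [NeZero n] (hτ : 1 ≤ τ) :
    let L : Matrix (ZMod n) (ZMod n) ℝ := fun x y =>
      (if y = x + 1 then 1 / 2 else 0) + (if y = x - 1 then 1 / 2 else 0)
    let p : ℝ := (L ^ (2 * τ)) 0 0
    max (1 / (n : ℝ)) ((Nat.choose (2 * τ) τ : ℝ) / 4 ^ τ) ≤ p ∧
      p ≤ 4 / (n : ℝ) + 1 / Real.sqrt (π * τ) ∧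
      1 / (2 * Real.sqrt τ) ≤ (Nat.choose (2 * τ) τ : ℝ) / 4 ^ τ := by
  intro L p
  have hnpos : 0 < n := Nat.pos_of_ne_zero (NeZero.ne n)
  have hnR : (0:ℝ) < n := by exact_mod_cast hnpos
  have haCB : (Nat.choose (2 * τ) τ : ℝ) / 4 ^ τ = aCB τ := by
    rw [aCB, Nat.centralBinom_eq_two_mul_choose]
  -- the binomial formula for p
  have hform := cycle_walk_formula n τ L rfl
  -- convert to a natural-number sum
  set T : ℕ := ∑ j ∈ range (2*τ+1),
    (if ((j : ZMod n) = ((2*τ - j : ℕ) : ZMod n)) then (2*τ).choose j else 0) with hT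
  have hp0 : p = (L ^ (2*τ)) 0 0 := rfl
  have hpT : p = (1/4 : ℝ)^τ * (T : ℝ) := by
    rw [hp0, hform, hT]
    push_cast
    congr 1
    apply Finset.sum_congr rfl
    intro j _
    split_ifs <;> simp
  -- properties of the condition
  have hcondτ : ((τ : ZMod n) = ((2*τ - τ : ℕ) : ZMod n)) := by
    rw [show 2*τ - τ = τ by omega]
  obtain ⟨m, hm0, hm2, hmdvd⟩ := exists_period n
  have hcondp : ∀ d, 0 < d → d ≤ τ →
      ((((τ+d : ℕ) : ZMod n) = ((2*τ - (τ+d) : ℕ) : ZMod n)) ↔ m ∣ d) := by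
    intro d _ hdτ
    rw [show 2*τ - (τ+d) = τ - d by omega, ZMod.natCast_eq_natCast_iff, ← hmdvd d]
    constructor
    · intro h
      have := (Nat.modEq_iff_dvd' (by omega : τ - d ≤ τ + d)).1 h.symm
      rwa [show (τ+d) - (τ-d) = 2*d by omega] at this
    · intro h
      refine ((Nat.modEq_iff_dvd' (by omega : τ - d ≤ τ + d)).2 ?_).symm
      rwa [show (τ+d) - (τ-d) = 2*d by omega]
  have hcondm : ∀ d, 0 < d → d ≤ τ →
      ((((τ-d : ℕ) : ZMod n) = ((2*τ - (τ-d) : ℕ) : ZMod n)) ↔ m ∣ d) := by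
    intro d _ hdτ
    rw [show 2*τ - (τ-d) = τ + d by omega, ZMod.natCast_eq_natCast_iff, ← hmdvd d]
    constructor
    · intro h
      have := (Nat.modEq_iff_dvd' (by omega : τ - d ≤ τ + d)).1 h
      rwa [show (τ+d) - (τ-d) = 2*d by omega] at this
    · intro h
      refine (Nat.modEq_iff_dvd' (by omega : τ - d ≤ τ + d)).2 ?_
      rwa [show (τ+d) - (τ-d) = 2*d by omega]
  -- symmetry of binomial coefficients
  have hsymC : ∀ d, d ≤ τ → (2*τ).choose (τ-d) = (2*τ).choose (τ+d) := by
    intro d hd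
    rw [← Nat.choose_symm (by omega : τ+d ≤ 2*τ)]
    congr 1
    omega
  set f : ℕ → ℕ := fun d => (2*τ).choose (τ+d) with hf
  set S : ℕ := ∑ d ∈ Ioc 0 τ, (if m ∣ d then f d else 0) with hS
  -- decomposition of T
  have hTdecomp : T = S + (2*τ).choose τ + S := by
    rw [hT, sum_decomp'
      (fun j => if ((j : ZMod n) = ((2*τ - j : ℕ) : ZMod n)) then (2*τ).choose j else 0) τ]
    rw [if_pos hcondτ]
    congr 1
    · congr 1
      apply Finset.sum_congr rfl
      intro d hd
      simp only [mem_Ioc] at hd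
      by_cases h : m ∣ d
      · rw [if_pos ((hcondm d hd.1 hd.2).2 h), if_pos h, hsymC d hd.2]
      · rw [if_neg (fun hc => h ((hcondm d hd.1 hd.2).1 hc)), if_neg h]
    · apply Finset.sum_congr rfl
      intro d hd
      simp only [mem_Ioc] at hd
      by_cases h : m ∣ d
      · rw [if_pos ((hcondp d hd.1 hd.2).2 h), if_pos h]
      · rw [if_neg (fun hc => h ((hcondp d hd.1 hd.2).1 hc)), if_neg h]
  -- total sum of binomials
  have htot : ∑ j ∈ range (2*τ+1), (2*τ).choose j = 4^τ := by
    rw [Nat.sum_range_choose, pow_mul]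
    norm_num
  have htot2 : 2 * ∑ d ∈ Ioc 0 τ, f d + (2*τ).choose τ = 4^τ := by
    rw [← htot, sum_decomp' ((2*τ).choose) τ]
    have : ∑ d ∈ Ioc 0 τ, (2*τ).choose (τ - d) = ∑ d ∈ Ioc 0 τ, f d := by
      apply Finset.sum_congr rfl
      intro d hd
      simp only [mem_Ioc] at hd
      exact hsymC d hd.2
    rw [this]
    ring
  -- bound on S
  have hmS : 2 * (m * S) ≤ 4^τ := by
    have h1 : m * S ≤ ∑ d ∈ Ioc 0 ((τ/m)*m), f d := by
      rw [hS, multiples_reindex f m hm0 τ]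
      exact mult_sum_le f (fun i j hij => choose_right_anti τ i j hij) m (τ/m)
    have h2 : ∑ d ∈ Ioc 0 ((τ/m)*m), f d ≤ ∑ d ∈ Ioc 0 τ, f d :=
      Finset.sum_le_sum_of_subset (Finset.Ioc_subset_Ioc le_rfl (Nat.div_mul_le_self τ m))
    omega
  -- real-number bounds
  have h4pos : (0:ℝ) < 4^τ := by positivity
  have hmR : (0:ℝ) < m := by exact_mod_cast hm0
  have hpT' : p = (T:ℝ) / 4^τ := by
    rw [hpT, one_div, inv_pow, ← div_eq_inv_mul]
  -- lower bound: central binomial term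
  have hCleT : (2*τ).choose τ ≤ T := by
    rw [hT]
    have := Finset.single_le_sum
      (f := fun (j : ℕ) => if ((j : ZMod n) = ((2*τ - j : ℕ) : ZMod n)) then (2*τ).choose j else 0)
      (fun i _ => Nat.zero_le _) (show τ ∈ range (2*τ+1) by simp only [mem_range]; omega)
    have h2 : (2*τ).choose τ ≤ (fun (j : ℕ) =>
        if ((j : ZMod n) = ((2*τ - j : ℕ) : ZMod n)) then (2*τ).choose j else 0) τ := by
      show (2*τ).choose τ ≤ if ((τ : ZMod n) = ((2*τ - τ : ℕ) : ZMod n)) then (2*τ).choose τ else 0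
      rw [if_pos hcondτ]
    exact h2.trans this
  have hlow2 : (Nat.choose (2 * τ) τ : ℝ) / 4 ^ τ ≤ p := by
    rw [hpT']
    gcongr

  -- upper bound
  have hup : p ≤ 4 / (n : ℝ) + 1 / Real.sqrt (π * τ) := by
    have hTle : (T:ℝ) ≤ (2*τ).choose τ + 4^τ / m := by
      have h1 : (2:ℝ) * (m * S) ≤ 4^τ := by exact_mod_cast hmS
      have h2 : (2*S : ℝ) ≤ 4^τ / m := by
        rw [le_div_iff₀ hmR]
        nlinarith [h1]
      have h3 : (T:ℝ) = 2*S + (2*τ).choose τ := by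
        rw [hTdecomp]; push_cast; ring
      linarith
    have hple : p ≤ (Nat.choose (2 * τ) τ : ℝ) / 4 ^ τ + 1/m := by
      rw [hpT']
      rw [div_le_iff₀ h4pos]
      have : ((Nat.choose (2 * τ) τ : ℝ) / 4 ^ τ + 1/m) * 4^τ
          = (2*τ).choose τ + 4^τ/m := by
        field_simp
      rw [this]
      exact hTle
    have hmn : (1:ℝ)/m ≤ 2/n := by
      rw [div_le_div_iff₀ hmR hnR]
      have : (n:ℝ) ≤ 2*m := by exact_mod_cast hm2
      linarith
    have haup : (Nat.choose (2 * τ) τ : ℝ) / 4 ^ τ ≤ 1 / Real.sqrt (π * τ) := by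
      rw [haCB]
      exact aCB_le_inv_sqrt_pi τ hτ
    have h24 : (2:ℝ)/n ≤ 4/n := by
      rw [div_le_div_iff₀ hnR hnR]
      nlinarith
    calc p ≤ (Nat.choose (2 * τ) τ : ℝ) / 4 ^ τ + 1/m := hple
      _ ≤ 1 / Real.sqrt (π * τ) + 2/n := add_le_add haup hmn
      _ ≤ 4 / (n : ℝ) + 1 / Real.sqrt (π * τ) := by linarith
  refine ⟨max_le ?_ hlow2, hup, ?_⟩
  · exact one_div_le_p n τ L rfl
  · rw [haCB]
    exact inv_sqrt_le_aCB τ hτ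
end

section
/- For any integer n ≥ 1 and τ ≥ 1, (1/n)·∑_{y=0}^{n-1} cos(2πy/n)^{2τ} ≤ 4/n + 1/√(πτ). -/
open Real Finset

-- exp(-u) ≤ 1 - u + u²/2 for u ≥ 0
private lemma exp_neg_le_quad {u : ℝ} (hu : 0 ≤ u) :
    Real.exp (-u) ≤ 1 - u + u ^ 2 / 2 := by
  have hmono : Monotone (fun u : ℝ => 1 - u + u ^ 2 / 2 - Real.exp (-u)) := by
    apply monotone_of_deriv_nonneg
    · fun_prop
    · intro x
      have hd : HasDerivAt (fun u : ℝ => 1 - u + u ^ 2 / 2 - Real.exp (-u))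
          ((0 - 1 + 2 * x ^ 1 / 2) - Real.exp (-x) * (-1)) x := by
        exact (((hasDerivAt_const x (1:ℝ)).sub (hasDerivAt_id x)).add
          ((hasDerivAt_pow 2 x).div_const 2)).sub
          ((Real.hasDerivAt_exp (-x)).comp x ((hasDerivAt_id x).neg))
      rw [hd.deriv]
      have h1 := Real.add_one_le_exp (-x)
      nlinarith [Real.exp_pos (-x)]
  have := hmono hu
  simp only [Real.exp_zero] at this
  norm_num at this
  linarith

-- 1 - u + u²/2 - u³/6 ≤ exp(-u) for u ≥ 0
private lemma cubic_le_exp_neg {u : ℝ} (hu : 0 ≤ u) :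
    1 - u + u ^ 2 / 2 - u ^ 3 / 6 ≤ Real.exp (-u) := by
  have hmono : MonotoneOn
      (fun u : ℝ => Real.exp (-u) - (1 - u + u ^ 2 / 2 - u ^ 3 / 6)) (Set.Ici 0) := by
    apply monotoneOn_of_deriv_nonneg (convex_Ici 0)
    · fun_prop
    · fun_prop
    · intro x hx
      rw [interior_Ici] at hx
      have hd : HasDerivAt (fun u : ℝ => Real.exp (-u) - (1 - u + u ^ 2 / 2 - u ^ 3 / 6))
          (Real.exp (-x) * (-1) - ((0 - 1 + 2 * x ^ 1 / 2) - 3 * x ^ 2 / 6)) x := by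
        exact ((Real.hasDerivAt_exp (-x)).comp x ((hasDerivAt_id x).neg)).sub
          ((((hasDerivAt_const x (1:ℝ)).sub (hasDerivAt_id x)).add
            ((hasDerivAt_pow 2 x).div_const 2)).sub ((hasDerivAt_pow 3 x).div_const 6))
      rw [hd.deriv]
      have h1 := exp_neg_le_quad (le_of_lt hx)
      nlinarith
  have := hmono Set.self_mem_Ici (Set.mem_Ici.2 hu) hu
  simp only [Real.exp_zero] at this
  norm_num at this
  linarith

-- cos x ≤ exp(-x²/2) on [0, π/2]
private lemma cos_le_exp_neg_sq {x : ℝ} (h0 : 0 ≤ x) (h2 : x ≤ π / 2) :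
    Real.cos x ≤ Real.exp (-(x ^ 2 / 2)) := by
  rcases eq_or_lt_of_le h0 with rfl | hx
  · simp
  set t := x / 2 with ht
  have ht0 : 0 < t := by positivity
  have hπ : π < 3.15 := Real.pi_lt_d2
  have ht79 : t ≤ 0.79 := by rw [ht]; nlinarith
  have ht1 : t ≤ 1 := by linarith
  have hs : t - t ^ 3 / 4 < Real.sin t := by
    have := Real.sin_gt_sub_cube ht0; nlinarith [pow_pos ht0 3]
  have hcos : Real.cos x = 1 - 2 * Real.sin t ^ 2 := by
    have h1 : Real.cos (2 * t) = 2 * Real.cos t ^ 2 - 1 := Real.cos_two_mul t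
    have h2 : Real.sin t ^ 2 + Real.cos t ^ 2 = 1 := Real.sin_sq_add_cos_sq t
    have h3 : 2 * t = x := by rw [ht]; ring
    rw [← h3, h1]; linarith
  have hx2 : x ^ 2 / 2 = 2 * t ^ 2 := by rw [ht]; ring
  rw [hcos, hx2]
  have hexp := cubic_le_exp_neg (u := 2 * t ^ 2) (by positivity)
  have hcube : 0 ≤ t - t ^ 3 / 4 := by nlinarith
  have hsin2 : (t - t ^ 3 / 4) ^ 2 ≤ Real.sin t ^ 2 := by nlinarith
  have htsq : t ^ 2 ≤ 0.6241 := by nlinarith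
  have ht6 : t ^ 6 ≤ 0.6241 * t ^ 4 := by nlinarith [pow_nonneg ht0.le 4, mul_le_mul_of_nonneg_left htsq (pow_nonneg ht0.le 4)]
  nlinarith [ht6, hsin2, hexp]

private lemma card_le_four (a b c d : ℕ) : ({a, b, c, d} : Finset ℕ).card ≤ 4 := by
  have h1 := Finset.card_insert_le a ({b, c, d} : Finset ℕ)
  have h2 := Finset.card_insert_le b ({c, d} : Finset ℕ)
  have h3 := Finset.card_insert_le c ({d} : Finset ℕ)
  simp only [Finset.card_singleton] at h3
  omega

-- each fiber of y ↦ min(2y%n, n-2y%n)/2 on range n has at most 4 elements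
private lemma fiber_card_le (n t : ℕ) (hn : 1 ≤ n) :
    ((Finset.range n).filter
      (fun y => (min (2 * y % n) (n - 2 * y % n)) / 2 = t)).card ≤ 4 := by
  have key : ∀ y, y ∈ (Finset.range n).filter
      (fun y => (min (2 * y % n) (n - 2 * y % n)) / 2 = t) →
      ∃ r q, r < n ∧ (q = 0 ∨ q = 1) ∧ 2 * y = n * q + r ∧ min r (n - r) / 2 = t := by
    intro y hy
    simp only [Finset.mem_filter, Finset.mem_range] at hy
    have hdm := Nat.div_add_mod (2 * y) n
    have hq2 : 2 * y / n < 2 := Nat.div_lt_of_lt_mul (by omega)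
    have hq01 : 2 * y / n = 0 ∨ 2 * y / n = 1 := by
      rcases Nat.lt_or_ge (2 * y / n) 1 with h | h
      · exact Or.inl (Nat.lt_one_iff.mp h)
      · exact Or.inr (le_antisymm (Nat.lt_succ_iff.mp hq2) h)
    rcases hq01 with h | h <;> rw [h] at hdm
    · exact ⟨2 * y % n, 0, Nat.mod_lt _ hn, Or.inl rfl, by omega, hy.2⟩
    · exact ⟨2 * y % n, 1, Nat.mod_lt _ hn, Or.inr rfl, by omega, hy.2⟩
  rcases Nat.even_or_odd n with he | ho
  · obtain ⟨k, hk⟩ := he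
    refine le_trans (Finset.card_le_card (fun y hy => ?_)) (card_le_four t (n/2 + t) (n/2 - t) (n - t))
    obtain ⟨r, q, hr, hq, h2y, hmin⟩ := key y hy
    simp only [Finset.mem_insert, Finset.mem_singleton]
    rcases hq with rfl | rfl <;> omega
  · obtain ⟨k, hk⟩ := ho
    refine le_trans (Finset.card_le_card (fun y hy => ?_))
      (card_le_four t ((n + 2*t + 1)/2) (n - t) ((n - 2*t - 1)/2))
    obtain ⟨r, q, hr, hq, h2y, hmin⟩ := key y hy
    simp only [Finset.mem_insert, Finset.mem_singleton]
    rcases hq with rfl | rfl <;> omega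

private lemma term_le (n τ y : ℕ) (hn : 1 ≤ n) (hy : y < n) :
    Real.cos (2 * π * y / n) ^ (2 * τ) ≤
      Real.exp (-((4 * π ^ 2 * τ / (n:ℝ) ^ 2) *
        (((min (2 * y % n) (n - 2 * y % n)) / 2 : ℕ) : ℝ) ^ 2)) := by
  have hn0 : (0:ℝ) < n := by exact_mod_cast hn
  set r := 2 * y % n with hrdef
  set m := min r (n - r) with hmdef
  set s := m / 2 with hsdef
  have hrn : r < n := Nat.mod_lt _ hn
  have hm2 : 2 * m ≤ n := by omega
  have hmr : m ≤ r ∧ m ≤ n - r ∧ (m = r ∨ m = n - r) := by omega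
  -- step 1: cos(2πy/n)² = cos(πm/n)²
  have key1 : Real.cos (2 * π * y / n) ^ 2 = Real.cos (π * m / n) ^ 2 := by
    have hdm := Nat.div_add_mod (2 * y) n
    have hq2 : 2 * y / n < 2 := Nat.div_lt_of_lt_mul (by omega)
    have hq01 : 2 * y / n = 0 ∨ 2 * y / n = 1 := by
      rcases Nat.lt_or_ge (2 * y / n) 1 with h | h
      · exact Or.inl (Nat.lt_one_iff.mp h)
      · exact Or.inr (le_antisymm (Nat.lt_succ_iff.mp hq2) h)
    have hstep : Real.cos (2 * π * y / n) ^ 2 = Real.cos (π * r / n) ^ 2 := by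
      rcases hq01 with h | h <;> rw [h] at hdm
      · have h2y : 2 * y = r := by omega
        have : 2 * π * y / n = π * r / n := by
          field_simp
          exact_mod_cast congrArg (Nat.cast (R := ℝ)) h2y
        rw [this]
      · have h2y : 2 * y = n + r := by omega
        have hang : 2 * π * y / n = π * r / n + π := by
          have h2yr : ((2 * y : ℕ) : ℝ) = (n : ℝ) + r := by exact_mod_cast congrArg (Nat.cast (R := ℝ)) h2y
          push_cast at h2yr ⊢
          field_simp
          linear_combination h2yr
        rw [hang, Real.cos_add_pi]
        ring
    rcases hmr.2.2 with hcase | hcase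
    · rw [hstep, hcase]
    · have hrm : (r : ℝ) = n - m := by
        have : m + r = n := by omega
        have := congrArg (Nat.cast (R := ℝ)) this
        push_cast at this
        linarith
      have : π * r / n = π - π * m / n := by
        rw [hrm]; field_simp
      rw [hstep, this, Real.cos_pi_sub]
      ring
  -- step 2: angle in [0, π/2]
  have hang0 : 0 ≤ π * m / n := by positivity
  have hang2 : π * m / n ≤ π / 2 := by
    rw [div_le_div_iff₀ hn0 (by norm_num : (0:ℝ) < 2)]
    have : (2 * m : ℝ) ≤ n := by exact_mod_cast hm2
    nlinarith [Real.pi_pos]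
  have hcosle := cos_le_exp_neg_sq hang0 hang2
  have hcosnn : 0 ≤ Real.cos (π * m / n) :=
    Real.cos_nonneg_of_mem_Icc ⟨by linarith, hang2⟩
  -- step 3: assemble powers
  have h2sn : 2 * s ≤ m := by omega
  have h2s : 2 * (s : ℝ) ≤ (m : ℝ) := by exact_mod_cast h2sn
  calc Real.cos (2 * π * y / n) ^ (2 * τ)
      = (Real.cos (2 * π * y / n) ^ 2) ^ τ := by rw [← pow_mul]
    _ = (Real.cos (π * m / n) ^ 2) ^ τ := by rw [key1]
    _ ≤ (Real.exp (-((π * m / n) ^ 2 / 2)) ^ 2) ^ τ := by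
        apply pow_le_pow_left₀ (by positivity)
        exact pow_le_pow_left₀ hcosnn hcosle 2
    _ = Real.exp (-(τ * (π * m / n) ^ 2)) := by
        rw [← Real.exp_nat_mul, ← Real.exp_nat_mul]
        · ring_nf
    _ ≤ Real.exp (-((4 * π ^ 2 * τ / (n:ℝ) ^ 2) * (s : ℝ) ^ 2)) := by
        apply Real.exp_le_exp.2
        apply neg_le_neg
        have e1 : (4 * π ^ 2 * τ / (n:ℝ) ^ 2) * (s:ℝ) ^ 2
            = (π ^ 2 * τ / (n:ℝ) ^ 2) * (2 * (s:ℝ)) ^ 2 := by ring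
        have e2 : (τ : ℝ) * (π * m / n) ^ 2 = (π ^ 2 * τ / (n:ℝ) ^ 2) * (m:ℝ) ^ 2 := by
          field_simp
        rw [e1, e2]
        apply mul_le_mul_of_nonneg_left _ (by positivity)
        apply pow_le_pow_left₀ (by positivity) h2s

private lemma tail_bound (M : ℕ) {a : ℝ} (ha : 0 < a) :
    ∑ t ∈ Finset.range (M + 1), Real.exp (-(a * (t : ℝ) ^ 2)) ≤ 1 + Real.sqrt (π / a) / 2 := by
  rw [Finset.sum_range_succ']
  have h0 : Real.exp (-(a * ((0:ℕ) : ℝ) ^ 2)) = 1 := by norm_num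
  rw [h0]
  have hanti : AntitoneOn (fun x : ℝ => Real.exp (-(a * x ^ 2))) (Set.Icc (0:ℝ) (0 + (M:ℕ))) := by
    intro u hu v hv huv
    apply Real.exp_le_exp.2
    simp only [neg_le_neg_iff]
    have hu0 : 0 ≤ u := hu.1
    nlinarith [mul_le_mul_of_nonneg_left (mul_self_le_mul_self hu0 huv) ha.le]
  have hint := hanti.sum_le_integral
  have hIoi : ∫ x in Set.Ioi (0:ℝ), Real.exp (-(a * x ^ 2)) = Real.sqrt (π / a) / 2 := by
    simpa [neg_mul] using integral_gaussian_Ioi a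
  have hle : (∫ x in (0:ℝ)..(0 + (M:ℕ)), Real.exp (-(a * x ^ 2)))
      ≤ ∫ x in Set.Ioi (0:ℝ), Real.exp (-(a * x ^ 2)) := by
    rw [intervalIntegral.integral_of_le (by positivity)]
    apply MeasureTheory.setIntegral_mono_set
    · have := (integrable_exp_neg_mul_sq ha).integrableOn (s := Set.Ioi (0:ℝ))
      simpa [neg_mul] using this
    · filter_upwards with x using (Real.exp_pos _).le
    · exact (Set.Ioc_subset_Ioi_self).eventuallyLE
  have hsum : (∑ i ∈ Finset.range M, Real.exp (-(a * ((i + 1 : ℕ) : ℝ) ^ 2)))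
      ≤ Real.sqrt (π / a) / 2 := by
    refine le_trans ?_ (hle.trans hIoi.le)
    convert hint using 2 with i
    push_cast
    · rfl
    · simp
  linarith

theorem cosine_power_sum_bound (n τ : ℕ) (hn : 1 ≤ n) (hτ : 1 ≤ τ) :
    (1 / (n : ℝ)) * ∑ y ∈ Finset.range n, Real.cos (2 * π * y / n) ^ (2 * τ) ≤
      4 / (n : ℝ) + 1 / Real.sqrt (π * τ) := by
  have hn0 : (0:ℝ) < n := by exact_mod_cast hn
  have hτ0 : (0:ℝ) < τ := by exact_mod_cast hτ
  set a : ℝ := 4 * π ^ 2 * τ / (n:ℝ) ^ 2 with ha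
  have ha0 : 0 < a := by positivity
  set g : ℕ → ℕ := fun y => (min (2 * y % n) (n - 2 * y % n)) / 2 with hg
  have hmaps : ∀ y ∈ Finset.range n, g y ∈ Finset.range (n / 4 + 1) := by
    intro y hy
    simp only [Finset.mem_range] at hy ⊢
    have hr : 2 * y % n < n := Nat.mod_lt _ hn
    simp only [hg]
    omega
  have step1 : ∑ y ∈ Finset.range n, Real.cos (2 * π * y / n) ^ (2 * τ)
      ≤ ∑ y ∈ Finset.range n, Real.exp (-(a * ((g y : ℕ) : ℝ) ^ 2)) := by
    apply Finset.sum_le_sum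
    intro y hy
    simp only [Finset.mem_range] at hy
    exact term_le n τ y hn hy
  have step2 : ∑ y ∈ Finset.range n, Real.exp (-(a * ((g y : ℕ) : ℝ) ^ 2))
      ≤ 4 * ∑ t ∈ Finset.range (n / 4 + 1), Real.exp (-(a * (t : ℝ) ^ 2)) := by
    rw [← Finset.sum_fiberwise_of_maps_to' hmaps (fun t : ℕ => Real.exp (-(a * (t : ℝ) ^ 2)))]
    rw [Finset.mul_sum]
    apply Finset.sum_le_sum
    intro t _
    rw [Finset.sum_const, nsmul_eq_mul]
    apply mul_le_mul_of_nonneg_right _ (Real.exp_pos _).le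
    exact_mod_cast fiber_card_le n t hn
  have step3 := tail_bound (n / 4) ha0
  have hsq : Real.sqrt (π / a) = (n : ℝ) / (2 * Real.sqrt (π * τ)) := by
    have hπτ : (0:ℝ) < π * τ := by positivity
    have h1 : π / a = ((n:ℝ) / (2 * Real.sqrt (π * τ))) ^ 2 := by
      rw [div_pow, mul_pow, Real.sq_sqrt hπτ.le, ha]
      field_simp
      ring
    rw [h1, Real.sqrt_sq (by positivity)]
  have hS : ∑ y ∈ Finset.range n, Real.cos (2 * π * y / n) ^ (2 * τ)
      ≤ 4 * (1 + (n : ℝ) / (2 * Real.sqrt (π * τ)) / 2) := by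
    calc ∑ y ∈ Finset.range n, Real.cos (2 * π * y / n) ^ (2 * τ)
        ≤ 4 * ∑ t ∈ Finset.range (n / 4 + 1), Real.exp (-(a * (t : ℝ) ^ 2)) :=
          le_trans step1 step2
      _ ≤ 4 * (1 + Real.sqrt (π / a) / 2) := by linarith
      _ = 4 * (1 + (n : ℝ) / (2 * Real.sqrt (π * τ)) / 2) := by rw [hsq]
  have hsπτ : (0:ℝ) < Real.sqrt (π * τ) := Real.sqrt_pos.2 (by positivity)
  have hfinal := mul_le_mul_of_nonneg_left hS (by positivity : (0:ℝ) ≤ 1 / n)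
  refine le_trans hfinal (le_of_eq ?_)
  field_simp
  ring
end

section
/- Let N_e(d, 2τ) be the number of sequences in {1,…,d}^{2τ} in which every symbol appears an even number of times. Then N_e(d, 2τ) ≥ d^{2τ}/2^d. Equivalently, N_e(d,2τ) = (1/2^d)·∑_{k=0}^{d} C(d,k)·(d-2k)^{2τ} ≥ d^{2τ}/2^d. -/
open Finset

theorem even_occurrence_sequences_count (d τ : ℕ) (hd : 1 ≤ d) :
    let Ne : ℕ :=
      (Finset.univ.filter (fun f : Fin (2 * τ) → Fin d =>
        ∀ s : Fin d, Even ((Finset.univ.filter (fun i => f i = s)).card))).card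
    (d : ℝ) ^ (2 * τ) / 2 ^ d ≤ (Ne : ℝ) ∧
      (Ne : ℝ) = (1 / 2 ^ d) *
        ∑ k ∈ Finset.range (d + 1), (d.choose k : ℝ) * ((d : ℝ) - 2 * k) ^ (2 * τ) := by
  intro Ne
  have h2 : (0:ℝ) < 2 ^ d := by positivity
  -- key identity
  have key : (Ne : ℝ) * 2 ^ d =
      ∑ k ∈ Finset.range (d + 1), (d.choose k : ℝ) * ((d : ℝ) - 2 * k) ^ (2 * τ) := by
    -- Step A : 2^d * Ne = sum over f of product of (1 + (-1)^count)
    have stepA : (Ne : ℝ) * 2 ^ d =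
        ∑ f : Fin (2 * τ) → Fin d, ∏ s : Fin d,
          ((-1 : ℝ) ^ ((Finset.univ.filter (fun i => f i = s)).card) + 1) := by
      have hfac : ∀ f : Fin (2 * τ) → Fin d,
          ∏ s : Fin d, ((-1 : ℝ) ^ ((Finset.univ.filter (fun i => f i = s)).card) + 1)
            = if (∀ s : Fin d, Even ((Finset.univ.filter (fun i => f i = s)).card))
              then (2:ℝ)^d else 0 := by
        intro f
        have : ∀ s : Fin d,
            ((-1 : ℝ) ^ ((Finset.univ.filter (fun i => f i = s)).card) + 1)
              = 2 * (if Even ((Finset.univ.filter (fun i => f i = s)).card) then (1:ℝ) else 0) := by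
          intro s
          by_cases h : Even ((Finset.univ.filter (fun i => f i = s)).card)
          · simp [h, Even.neg_one_pow h]; ring
          · simp [h, Odd.neg_one_pow (Nat.not_even_iff_odd.mp h)]
        rw [Finset.prod_congr rfl (fun s _ => this s), Finset.prod_mul_distrib,
          Finset.prod_const, Finset.prod_boole]
        simp [Finset.card_univ]
      rw [Finset.sum_congr rfl (fun f _ => hfac f)]
      rw [Finset.sum_ite, Finset.sum_const, Finset.sum_const_zero, add_zero, nsmul_eq_mul]
    -- fiber counting
    have hfib : ∀ (S : Finset (Fin d)) (f : Fin (2 * τ) → Fin d),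
        ∑ s ∈ S, ((Finset.univ.filter (fun i => f i = s)).card)
          = (Finset.univ.filter (fun i => f i ∈ S)).card := by
      intro S f
      rw [Finset.card_eq_sum_card_fiberwise (f := f) (s := Finset.univ.filter (fun i => f i ∈ S)) (t := S)
        (fun x hx => (Finset.mem_filter.mp hx).2)]
      refine Finset.sum_congr rfl fun s hs => ?_
      congr 1
      ext i
      simp only [Finset.mem_filter, Finset.mem_univ, true_and]
      constructor
      · rintro rfl; exact ⟨hs, rfl⟩
      · rintro ⟨-, rfl⟩; rfl
    -- expand the product, swap sums
    have stepB : ∀ f : Fin (2 * τ) → Fin d,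
        ∏ s : Fin d, ((-1 : ℝ) ^ ((Finset.univ.filter (fun i => f i = s)).card) + 1)
          = ∑ S ∈ (Finset.univ : Finset (Fin d)).powerset,
              ∏ i : Fin (2 * τ), (if f i ∈ S then (-1:ℝ) else 1) := by
      intro f
      rw [Finset.prod_add]
      refine Finset.sum_congr rfl fun S _ => ?_
      rw [Finset.prod_const_one, mul_one, Finset.prod_pow_eq_pow_sum, hfib]
      rw [Finset.prod_ite, Finset.prod_const, Finset.prod_const, one_pow, mul_one]
    rw [stepA, Finset.sum_congr rfl (fun f _ => stepB f), Finset.sum_comm]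
    have stepC : ∀ S : Finset (Fin d),
        ∑ f : Fin (2 * τ) → Fin d, ∏ i : Fin (2 * τ), (if f i ∈ S then (-1:ℝ) else 1)
          = ((d : ℝ) - 2 * S.card) ^ (2 * τ) := by
      intro S
      rw [← Fintype.sum_pow (fun x : Fin d => if x ∈ S then (-1:ℝ) else 1) (2 * τ)]
      congr 1
      rw [Finset.sum_ite, Finset.sum_const, Finset.sum_const]
      have h1 : Finset.univ.filter (fun x : Fin d => x ∈ S) = S := by
        ext x; simp
      have h2 : (Finset.univ.filter (fun x : Fin d => ¬ x ∈ S)) = Sᶜ := by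
        ext x; simp
      rw [h1, h2, Finset.card_compl, Fintype.card_fin]
      have hle : S.card ≤ d := by
        simpa [Fintype.card_fin] using Finset.card_le_univ S
      simp only [nsmul_eq_mul, mul_one, mul_neg_one]
      rw [Nat.cast_sub hle]
      push_cast
      ring
    rw [Finset.sum_congr rfl (fun S _ => stepC S), Finset.sum_powerset]
    rw [Finset.card_univ, Fintype.card_fin]
    refine Finset.sum_congr rfl fun k hk => ?_
    have : ∀ S ∈ Finset.powersetCard k (Finset.univ : Finset (Fin d)),
        ((d : ℝ) - 2 * S.card) ^ (2 * τ) = ((d : ℝ) - 2 * k) ^ (2 * τ) := by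
      intro S hS
      rw [(Finset.mem_powersetCard_univ.mp hS)]
    rw [Finset.sum_congr rfl this, Finset.sum_const, Finset.card_powersetCard,
      Finset.card_univ, Fintype.card_fin, nsmul_eq_mul]
  have hsum : (d : ℝ) ^ (2 * τ) ≤
      ∑ k ∈ Finset.range (d + 1), (d.choose k : ℝ) * ((d : ℝ) - 2 * k) ^ (2 * τ) := by
    have h0 : (0 : ℕ) ∈ Finset.range (d + 1) := by simp
    have := Finset.single_le_sum (f := fun k =>
        (d.choose k : ℝ) * ((d : ℝ) - 2 * k) ^ (2 * τ)) (fun k _ => by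
      have : (0:ℝ) ≤ ((d : ℝ) - 2 * k) ^ (2 * τ) := (even_two_mul τ).pow_nonneg _
      positivity) h0
    simpa using this
  constructor
  · rw [div_le_iff₀ h2, key]; exact hsum
  · rw [one_div, inv_mul_eq_div, eq_div_iff (ne_of_gt h2)]
    exact key
end
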